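/- If p and r are distinct elements of V₂₄ with |p - r| = 1 (i.e., they are endpoints of an edge of the 24-cell with vertices V₂₄), then the quaternion e = p r⁻¹ satisfies e³ = -1. -/

import Mathlib

open Quaternion

noncomputable section

def qi : ℍ[ℝ] := ⟨0, 1, 0, 0⟩
def qj : ℍ[ℝ] := ⟨0, 0, 1, 0⟩
def qk : ℍ[ℝ] := ⟨0, 0, 0, 1⟩

def V8 : Set ℍ[ℝ] := {1, -1, qi, -qi, qj, -qj, qk, -qk}

def V16 : Set ℍ[ℝ] :=
  {q | ∃ a b c d : ℝ, a ∈ ({1, -1} : Set ℝ) ∧ b ∈ ({1, -1} : Set ℝ) ∧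
    c ∈ ({1, -1} : Set ℝ) ∧ d ∈ ({1, -1} : Set ℝ) ∧ q = ⟨a / 2, b / 2, c / 2, d / 2⟩}

def V24 : Set ℍ[ℝ] := V8 ∪ V16

def omg : ℍ[ℝ] := ⟨1 / 2, 1 / 2, 1 / 2, 1 / 2⟩

def V24' : Set ℍ[ℝ] :=
  {q | ∃ x ∈ ({1, qi, qj, qk} : Set ℍ[ℝ]), ∃ y ∈ ({1, qi, qj, qk} : Set ℍ[ℝ]), x ≠ y ∧
    ∃ s t : ℝ, s ∈ ({1, -1} : Set ℝ) ∧ t ∈ ({1, -1} : Set ℝ) ∧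
      q = (Real.sqrt 2)⁻¹ • (s • x + t • y)}

lemma normSq_V24 : ∀ p ∈ V24, Quaternion.normSq p = 1 := by
  rintro p (hp | hp)
  · rcases hp with rfl | rfl | rfl | rfl | rfl | rfl | rfl | rfl <;>
      (rw [Quaternion.normSq_def']; simp -failIfUnchanged only [Quaternion.re_neg, Quaternion.imI_neg, Quaternion.imJ_neg, Quaternion.imK_neg]; simp [qi, qj, qk])
  · obtain ⟨a, b, c, d, ha, hb, hc, hd, rfl⟩ := hp
    rcases ha with rfl | rfl <;> rcases hb with rfl | rfl <;>
      rcases hc with rfl | rfl <;> rcases hd with rfl | rfl <;>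
      · erw [Quaternion.normSq_def']; norm_num

theorem stmt_12 :
    ∀ p ∈ V24, ∀ r ∈ V24, p ≠ r → ‖p - r‖ = 1 → (p * r⁻¹) ^ 3 = -1 := by
  intro p hp r hr _ hnorm
  have hp1 : Quaternion.normSq p = 1 := normSq_V24 p hp
  have hr1 : Quaternion.normSq r = 1 := normSq_V24 r hr
  have hrinv : r⁻¹ = star r := by
    symm
    apply eq_inv_of_mul_eq_one_left
    rw [Quaternion.star_mul_self, hr1, Quaternion.coe_one]
  set e : ℍ[ℝ] := p * r⁻¹ with he
  have hes : Quaternion.normSq e = 1 := by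
    rw [he, hrinv, map_mul, Quaternion.normSq_star, hp1, hr1, one_mul]
  -- re e = 1/2 from the norm condition
  have hsub : Quaternion.normSq (p - r) = 1 := by
    have := Quaternion.normSq_eq_norm_mul_self (p - r)
    rw [hnorm] at this; simpa using this
  have hre : e.re = 1 / 2 := by
    have hexp : Quaternion.normSq (p - r)
        = Quaternion.normSq p + Quaternion.normSq r - 2 * (p * star r).re := by
      simp only [Quaternion.normSq_def', Quaternion.re_sub, Quaternion.imI_sub,
        Quaternion.imJ_sub, Quaternion.imK_sub, Quaternion.re_mul, Quaternion.re_star,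
        Quaternion.imI_star, Quaternion.imJ_star, Quaternion.imK_star]
      ring
    rw [hsub, hp1, hr1] at hexp
    have : (p * star r).re = 1 / 2 := by linarith
    rw [he, hrinv]; exact this
  -- characteristic equation: e^2 = e - 1
  have hchar : e ^ 2 = e - 1 := by
    have h1 : e * (e + star e) = e * ((2 * e.re : ℝ) : ℍ[ℝ]) := by
      rw [Quaternion.self_add_star']
    rw [mul_add, Quaternion.self_mul_star, hes, hre] at h1
    norm_num at h1
    rw [sq, eq_sub_iff_add_eq]
    exact h1
  calc e ^ 3 = e * e ^ 2 := by noncomm_ring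
    _ = e * (e - 1) := by rw [hchar]
    _ = e ^ 2 - e := by noncomm_ring
    _ = (e - 1) - e := by rw [hchar]
    _ = -1 := by noncomm_ring

end
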